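/- arXiv:2106.01224 — 3 statements merged into one kernel-verified Lean document; each statement's English description precedes it below -/
import Mathlib

section
/- Every satisfiable BST⊗-conjunction with n distinct variables is fulfilled by an accessible ⊗-graph of size at most 2^n − 1. -/
namespace BSTO

/-- The unordered Cartesian product `s ⊗ t = {{u,v} | u ∈ s, v ∈ t}`, as a class of ZFC sets. -/
def uprod (s t : ZFSet) : Set ZFSet := {w | ∃ u ∈ s, ∃ v ∈ t, w = ({u, v} : ZFSet)}

/-- A partition: a collection of pairwise disjoint nonempty sets. -/
def IsPartition (S : ZFSet) : Prop :=
  (∀ b, b ∈ S → b ≠ (∅ : ZFSet)) ∧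
    ∀ b, b ∈ S → ∀ c, c ∈ S → b ≠ c → ∀ t, t ∈ b → t ∉ c

/-- `Pow*₁,₂ B`: members of the intersecting power set of `B` of cardinality 1 or 2. -/
def powAst12 (B : ZFSet) : Set ZFSet :=
  {t | t ⊆ ZFSet.sUnion B ∧ (∀ s, s ∈ B → ∃ u, u ∈ t ∧ u ∈ s) ∧ ∃ u v : ZFSet, t = {u, v}}

/-- BST⊗-formulae. -/
inductive Fmla (V : Type) : Type
  | eqUnion (x y z : V)
  | eqInter (x y z : V)
  | eqDiff  (x y z : V)
  | eqUprod (x y z : V)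
  | subset  (x y : V)
  | not (φ : Fmla V)
  | and (φ ψ : Fmla V)
  | or (φ ψ : Fmla V)

def Fmla.Sat {V : Type} (M : V → ZFSet) : Fmla V → Prop
  | .eqUnion x y z => M x = M y ∪ M z
  | .eqInter x y z => M x = M y ∩ M z
  | .eqDiff x y z  => M x = M y \ M z
  | .eqUprod x y z => (M x).toSet = uprod (M y) (M z)
  | .subset x y    => M x ⊆ M y
  | .not φ         => ¬ Fmla.Sat M φ
  | .and φ ψ       => Fmla.Sat M φ ∧ Fmla.Sat M ψ
  | .or φ ψ        => Fmla.Sat M φ ∨ Fmla.Sat M ψ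

/-- A partition `S` satisfies `φ` if the set assignment induced by some
partition assignment `J` (mapping variables to sets of blocks) models `φ`. -/
def SatByPartition {V : Type} (S : ZFSet) (φ : Fmla V) : Prop :=
  ∃ J : V → ZFSet, (∀ v, J v ⊆ S) ∧ Fmla.Sat (fun v => ZFSet.sUnion (J v)) φ

/-- BST literals. -/
inductive BSTLit (V : Type) : Type
  | eqUnion (x y z : V)
  | eqDiff  (x y z : V)
  | ne (x y : V)

def BSTLit.Sat {V : Type} (M : V → ZFSet) : BSTLit V → Prop
  | .eqUnion x y z => M x = M y ∪ M z
  | .eqDiff x y z  => M x = M y \ M z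
  | .ne x y        => M x ≠ M y

/-- A map `F : V → pow(pow⁺ V)` fulfills a BST literal. -/
def BSTLit.FulfilledBy {V : Type} (F : V → Set (Set V)) : BSTLit V → Prop
  | .eqUnion x y z => F x = F y ∪ F z
  | .eqDiff x y z  => F x = F y \ F z
  | .ne x y        => F x ≠ F y

/-- BST⊗ literals. -/
inductive Lit (V : Type) : Type
  | eqUnion (x y z : V)
  | eqDiff  (x y z : V)
  | eqUprod (x y z : V)
  | ne (x y : V)

def Lit.Sat {V : Type} (M : V → ZFSet) : Lit V → Prop
  | .eqUnion x y z => M x = M y ∪ M z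
  | .eqDiff x y z  => M x = M y \ M z
  | .eqUprod x y z => (M x).toSet = uprod (M y) (M z)
  | .ne x y        => M x ≠ M y

/-- The nodes over a set of places: nonempty subsets of cardinality at most 2. -/
def NodesOf (P : Type) : Set (Set P) := {A | ∃ p q : P, A = {p, q}}

/-- Unordered product of two sets of places: the set of nodes `{u,v}`, `u ∈ s`, `v ∈ t`. -/
def setUprod {P : Type} (s t : Set P) : Set (Set P) := {A | ∃ u ∈ s, ∃ v ∈ t, A = {u, v}}

/-- Accessibility of a place from the source places, w.r.t. a target map `T`. -/
inductive Accessible {P : Type} (T : Set P → Set P) : P → Prop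
  | source (p : P) (h : ∀ A ∈ NodesOf P, p ∉ T A) : Accessible T p
  | step (p : P) (A : Set P) (hA : A ∈ NodesOf P)
      (hacc : ∀ q ∈ A, Accessible T q) (hp : p ∈ T A) : Accessible T p

/-- Conditions (a), (b), (c1)-(c3) for a literal, w.r.t. a ⊗-graph with target map `T`
and a candidate fulfilling map `F`. -/
def Lit.GraphFulfilled {P V : Type} (T : Set P → Set P) (F : V → Set P) : Lit V → Prop
  | .eqUnion x y z => F x = F y ∪ F z
  | .eqDiff x y z  => F x = F y \ F z
  | .ne x y        => F x ≠ F y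
  | .eqUprod x y z =>
      (∀ υ ∈ F y, ∀ ζ ∈ F z, (T {υ, ζ}).Nonempty ∧ T {υ, ζ} ⊆ F x) ∧
      F x ⊆ (⋃ A ∈ setUprod (F y) (F z), T A) ∧
      (⋃ A ∈ NodesOf P \ setUprod (F y) (F z), T A) ∩ F x = ∅

/-- A ⊗-graph (given by its target map `T`) fulfills the conjunction `Φ` via `F`. -/
def Fulfills {P V : Type} (T : Set P → Set P) (F : V → Set P) (Φ : List (Lit V)) : Prop :=
  ∀ l ∈ Φ, Lit.GraphFulfilled T F l

/-- `S'` is a ⊗-subpartition of the partition `S`. -/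
def OSubpart (S : ZFSet) (S' : Set ZFSet) : Prop :=
  S' ⊆ S.toSet ∧ ∃ B : Set ZFSet,
    (∀ b ∈ B, ∃ p, p ∈ S ∧ ∃ q, q ∈ S ∧ b = ({p, q} : ZFSet)) ∧
    (⋃ c ∈ S', c.toSet) = ⋃ b ∈ B, powAst12 b

/-- `Σ_⊗`: the maximal ⊗-subpartition of `S` (the union of all ⊗-subpartitions). -/
def sigmaOtimes (S : ZFSet) : Set ZFSet := {b | ∃ S', OSubpart S S' ∧ b ∈ S'}

/-- The target map of the ⊗-graph induced by a partition `S` via the bijection `e`,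
relative to the set `Pi` of ⊗-upblocks. -/
def inducedT (S : ZFSet) {P : Type} (e : P ≃ S.toSet) (Pi : Set ZFSet) (A : Set P) :
    Set P :=
  {q | ∃ p₁ p₂ : P, A = {p₁, p₂} ∧ ({(e p₁ : ZFSet), (e p₂ : ZFSet)} : ZFSet) ∈ Pi ∧
    (e q : ZFSet) ∈ sigmaOtimes S ∧
    ((e q : ZFSet).toSet ∩ powAst12 ({(e p₁ : ZFSet), (e p₂ : ZFSet)} : ZFSet)).Nonempty}

/-- `m` is the maximum of `Sp` w.r.t. the strict order `r`. -/
def IsMaxIn {P : Type} (r : P → P → Prop) (Sp : Set P) (m : P) : Prop :=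
  m ∈ Sp ∧ ∀ p ∈ Sp, p = m ∨ r p m

/-- `r` is a topological ⊗-order for the ⊗-graph with target map `T`:
a strict total order on places with `max A ≺ max T(A)` for every ⊗-node `A`. -/
def IsTopOOrder {P : Type} (T : Set P → Set P) (r : P → P → Prop) : Prop :=
  (∀ a, ¬ r a a) ∧ (∀ a b c, r a b → r b c → r a c) ∧ (∀ a b, a ≠ b → r a b ∨ r b a) ∧
  ∀ A ∈ NodesOf P, (T A).Nonempty →
    ∃ m m', IsMaxIn r A m ∧ IsMaxIn r (T A) m' ∧ r m m'

/-- Hereditarily finite ZFC sets. -/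
inductive IsHF : ZFSet → Prop
  | mk (x : ZFSet) (hfin : x.toSet.Finite) (hmem : ∀ y ∈ x, IsHF y) : IsHF x


section Stmt13Aux

variable {n : ℕ}

private def pl (M : Fin n → ZFSet) (a : ZFSet) : Set (Fin n) := {v | a ∈ M v}

private def Dom (M : Fin n → ZFSet) : Set ZFSet := {a | ∃ v, a ∈ M v}

private def Pl (M : Fin n → ZFSet) : Type := {σ : Set (Fin n) // ∃ a ∈ Dom M, σ = pl M a}

private def mkP (M : Fin n → ZFSet) (a : ZFSet) (h : a ∈ Dom M) : Pl M := ⟨pl M a, a, h, rfl⟩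

private def Fm (M : Fin n → ZFSet) (x : Fin n) : Set (Pl M) := {ρ | x ∈ ρ.val}

private def Tm (M : Fin n → ZFSet) (Φ : List (Lit (Fin n))) (A : Set (Pl M)) : Set (Pl M) :=
  {ρ | ∃ x y z, Lit.eqUprod x y z ∈ Φ ∧ ∃ u v : ZFSet, ∃ (hu : u ∈ M y) (hv : v ∈ M z)
    (hw : ({u, v} : ZFSet) ∈ Dom M),
    A = {mkP M u ⟨y, hu⟩, mkP M v ⟨z, hv⟩} ∧ ρ = mkP M ({u, v} : ZFSet) hw}

private lemma zf_pair_comm (u v : ZFSet) : ({u, v} : ZFSet) = {v, u} :=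
  ZFSet.ext fun w => by rw [ZFSet.mem_pair, ZFSet.mem_pair, or_comm]

private lemma zf_pair_eq {u v a b : ZFSet} (h : ({u, v} : ZFSet) = {a, b}) :
    (u = a ∧ v = b) ∨ (u = b ∧ v = a) := by
  have hu : u = a ∨ u = b := by
    have h1 : u ∈ ({a, b} : ZFSet) := by rw [← h]; exact ZFSet.mem_pair.mpr (Or.inl rfl)
    exact ZFSet.mem_pair.mp h1
  have hv : v = a ∨ v = b := by
    have h1 : v ∈ ({a, b} : ZFSet) := by rw [← h]; exact ZFSet.mem_pair.mpr (Or.inr rfl)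
    exact ZFSet.mem_pair.mp h1
  have hb : b = u ∨ b = v := by
    have h1 : b ∈ ({u, v} : ZFSet) := by rw [h]; exact ZFSet.mem_pair.mpr (Or.inr rfl)
    exact ZFSet.mem_pair.mp h1
  have ha : a = u ∨ a = v := by
    have h1 : a ∈ ({u, v} : ZFSet) := by rw [h]; exact ZFSet.mem_pair.mpr (Or.inl rfl)
    exact ZFSet.mem_pair.mp h1
  rcases hu with rfl | rfl <;> rcases hv with h2 | h2 <;> tauto

end Stmt13Aux

/-- every satisfiable BST⊗-conjunction with `n` distinct variables is
fulfilled by an accessible ⊗-graph of size at most `2^n - 1`. -/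
theorem stmt13 {n : ℕ} (Φ : List (Lit (Fin n)))
    (hsat : ∃ M : Fin n → ZFSet, ∀ l ∈ Φ, Lit.Sat M l) :
    ∃ (P : Type) (T : Set P → Set P),
      Finite P ∧ Nat.card P ≤ 2 ^ n - 1 ∧ (∀ A, A ∉ NodesOf P → T A = ∅) ∧
      (∀ p : P, Accessible T p) ∧ ∃ F : Fin n → Set P, Fulfills T F Φ := by
  classical
  obtain ⟨M, hM⟩ := hsat
  have memx : ∀ x y z, Lit.eqUprod x y z ∈ Φ → ∀ w : ZFSet,
      (w ∈ M x ↔ ∃ u ∈ M y, ∃ v ∈ M z, w = ({u, v} : ZFSet)) := by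
    intro x y z hl w
    have hx := hM _ hl
    simp only [Lit.Sat] at hx
    show w ∈ (M x).toSet ↔ _
    rw [hx]
    exact Iff.rfl
  refine ⟨Pl M, Tm M Φ, ?_, ?_, ?_, ?_, Fm M, ?_⟩
  · show Finite {σ : Set (Fin n) // ∃ a ∈ Dom M, σ = pl M a}
    infer_instance
  · -- cardinality
    have h1 : Nat.card (Pl M) = Set.ncard {σ : Set (Fin n) | ∃ a ∈ Dom M, σ = pl M a} :=
      Nat.card_coe_set_eq _
    have hsub : {σ : Set (Fin n) | ∃ a ∈ Dom M, σ = pl M a} ⊆ Set.univ \ {∅} := by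
      rintro σ ⟨a, ⟨v, hv⟩, rfl⟩
      refine ⟨trivial, ?_⟩
      intro hmem
      have : (∅ : Set (Fin n)) = pl M a := by
        simpa using (Set.mem_singleton_iff.mp hmem).symm
      have : v ∈ (∅ : Set (Fin n)) := by rw [this]; exact hv
      exact this
    have h2 : Set.ncard ({σ : Set (Fin n) | ∃ a ∈ Dom M, σ = pl M a}) ≤
        Set.ncard (Set.univ \ {∅} : Set (Set (Fin n))) :=
      Set.ncard_le_ncard hsub (Set.toFinite _)
    have h3 : Set.ncard (Set.univ \ {∅} : Set (Set (Fin n))) = 2 ^ n - 1 := by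
      rw [Set.ncard_diff (Set.subset_univ _) (Set.toFinite _), Set.ncard_univ,
        Set.ncard_singleton]
      congr 1
      simp [Nat.card_eq_fintype_card]
    omega
  · -- T vanishes outside nodes
    intro A hA
    apply Set.eq_empty_iff_forall_notMem.mpr
    rintro ρ ⟨x, y, z, hl, u, v, hu, hv, hw, hA', hρ⟩
    exact hA ⟨mkP M u ⟨y, hu⟩, mkP M v ⟨z, hv⟩, hA'⟩
  · -- accessibility
    have key : ∀ a : ZFSet, ∀ h : a ∈ Dom M, Accessible (Tm M Φ) (mkP M a h) := by
      intro a
      induction a using ZFSet.inductionOn with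
      | _ a IH =>
        intro ha
        by_cases hcase : ∃ x y z, Lit.eqUprod x y z ∈ Φ ∧ a ∈ M x
        · obtain ⟨x, y, z, hl, hax⟩ := hcase
          obtain ⟨u, hu, v, hv, heq⟩ := (memx x y z hl a).mp hax
          subst heq
          refine Accessible.step _ {mkP M u ⟨y, hu⟩, mkP M v ⟨z, hv⟩}
            ⟨mkP M u ⟨y, hu⟩, mkP M v ⟨z, hv⟩, rfl⟩ ?_ ?_
          · intro q hq
            rcases hq with rfl | rfl
            · exact IH u (ZFSet.mem_pair.mpr (Or.inl rfl)) ⟨y, hu⟩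
            · exact IH v (ZFSet.mem_pair.mpr (Or.inr rfl)) ⟨z, hv⟩
          · exact ⟨x, y, z, hl, u, v, hu, hv, ha, rfl, rfl⟩
        · apply Accessible.source
          intro A _ hmem
          obtain ⟨x, y, z, hl, u, v, hu, hv, hw, hA, hρ⟩ := hmem
          apply hcase
          refine ⟨x, y, z, hl, ?_⟩
          have hval : pl M a = pl M ({u, v} : ZFSet) := congrArg Subtype.val hρ
          have hwx : ({u, v} : ZFSet) ∈ M x := (memx x y z hl _).mpr ⟨u, hu, v, hv, rfl⟩
          have : x ∈ pl M a := by rw [hval]; exact hwx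
          exact this
    rintro ⟨σ, a, ha, rfl⟩
    exact key a ha
  · -- fulfills
    intro l hl
    have hs := hM l hl
    cases l with
    | eqUnion x y z =>
      simp only [Lit.Sat] at hs
      show Fm M x = Fm M y ∪ Fm M z
      ext ρ
      obtain ⟨σ, a, ha, rfl⟩ := ρ
      show a ∈ M x ↔ a ∈ M y ∨ a ∈ M z
      rw [hs]
      exact ZFSet.mem_union
    | eqDiff x y z =>
      simp only [Lit.Sat] at hs
      show Fm M x = Fm M y \ Fm M z
      ext ρ
      obtain ⟨σ, a, ha, rfl⟩ := ρ
      show a ∈ M x ↔ a ∈ M y ∧ ¬ a ∈ M z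
      rw [hs]
      exact ZFSet.mem_sdiff
    | ne x y =>
      simp only [Lit.Sat] at hs
      show Fm M x ≠ Fm M y
      intro heq
      apply hs
      apply ZFSet.ext
      intro a
      constructor
      · intro hax
        exact (Set.ext_iff.mp heq (mkP M a ⟨x, hax⟩)).mp hax
      · intro hay
        exact (Set.ext_iff.mp heq (mkP M a ⟨y, hay⟩)).mpr hay
    | eqUprod x y z =>
      refine ⟨?_, ?_, ?_⟩
      · rintro ⟨σ, a, ha, rfl⟩ hυ ⟨τ, b, hb, rfl⟩ hζ
        have hay : a ∈ M y := hυ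
        have hbz : b ∈ M z := hζ
        have hwD : ({a, b} : ZFSet) ∈ Dom M :=
          ⟨x, (memx x y z hl _).mpr ⟨a, hay, b, hbz, rfl⟩⟩
        constructor
        · exact ⟨mkP M ({a, b} : ZFSet) hwD, x, y, z, hl, a, b, hay, hbz, hwD, rfl, rfl⟩
        · rintro ρ ⟨x', y', z', hl', u, v, hu, hv, hw, hA, rfl⟩
          rcases Set.pair_eq_pair_iff.mp hA with ⟨h1, h2⟩ | ⟨h1, h2⟩
          · have e1 : pl M a = pl M u := congrArg Subtype.val h1
            have e2 : pl M b = pl M v := congrArg Subtype.val h2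
            have huy : u ∈ M y := by have : y ∈ pl M u := by rw [← e1]; exact hay
                                     exact this
            have hvz : v ∈ M z := by have : z ∈ pl M v := by rw [← e2]; exact hbz
                                     exact this
            show ({u, v} : ZFSet) ∈ M x
            exact (memx x y z hl _).mpr ⟨u, huy, v, hvz, rfl⟩
          · have e1 : pl M a = pl M v := congrArg Subtype.val h1
            have e2 : pl M b = pl M u := congrArg Subtype.val h2
            have hvy : v ∈ M y := by have : y ∈ pl M v := by rw [← e1]; exact hay
                                     exact this
            have huz : u ∈ M z := by have : z ∈ pl M u := by rw [← e2]; exact hbz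
                                     exact this
            show ({u, v} : ZFSet) ∈ M x
            exact (memx x y z hl _).mpr ⟨v, hvy, u, huz, zf_pair_comm u v⟩
      · rintro ⟨σ, c, hc, rfl⟩ hρ
        have hcx : c ∈ M x := hρ
        obtain ⟨a, hay, b, hbz, rfl⟩ := (memx x y z hl c).mp hcx
        apply Set.mem_iUnion₂.mpr
        refine ⟨{mkP M a ⟨y, hay⟩, mkP M b ⟨z, hbz⟩},
          ⟨mkP M a ⟨y, hay⟩, hay, mkP M b ⟨z, hbz⟩, hbz, rfl⟩,
          x, y, z, hl, a, b, hay, hbz, hc, rfl, rfl⟩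
      · apply Set.eq_empty_iff_forall_notMem.mpr
        rintro ρ ⟨h1, h2⟩
        obtain ⟨A, hAmem, hρT⟩ := Set.mem_iUnion₂.mp h1
        obtain ⟨hnode, hnot⟩ := hAmem
        obtain ⟨x', y', z', hl', u, v, hu, hv, hw, rfl, rfl⟩ := hρT
        have hwx : ({u, v} : ZFSet) ∈ M x := h2
        obtain ⟨a, hay, b, hbz, heq⟩ := (memx x y z hl _).mp hwx
        apply hnot
        rcases zf_pair_eq heq with ⟨rfl, rfl⟩ | ⟨rfl, rfl⟩
        · exact ⟨mkP M u ⟨y', hu⟩, hay, mkP M v ⟨z', hv⟩, hbz, rfl⟩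
        · exact ⟨mkP M v ⟨z', hv⟩, hay, mkP M u ⟨y', hu⟩, hbz, Set.pair_comm _ _⟩


end BSTO
end

section
/- Every nonempty well-founded set x (e.g. ZFSet) such that x ⊗ x ⊆ x (i.e., {u,v} ∈ x whenever u ∈ x and v ∈ x) is infinite. Consequently, the BST⊗-formula x ≠ x \ x ∧ x ⊗ x ⊆ x is satisfiable (for instance by interpreting x as the set HF of hereditarily finite sets) but admits no finite model. -/
namespace BSTO

noncomputable def Vn.{u} : ℕ → ZFSet.{u}
  | 0 => ∅
  | n + 1 => ZFSet.powerset (Vn n)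

lemma Vn_mono : ∀ n, Vn n ⊆ Vn (n + 1)
  | 0 => by intro y hy; exact absurd hy (ZFSet.notMem_empty y)
  | n + 1 => by
      intro y hy
      rw [Vn, ZFSet.mem_powerset] at hy ⊢
      exact fun z hz => Vn_mono n (hy hz)

lemma Vn_mono' {m n : ℕ} (h : m ≤ n) : Vn m ⊆ Vn n := by
  induction h with
  | refl => exact fun _ h => h
  | step _ ih => exact fun z hz => Vn_mono _ (ih hz)

noncomputable def Vω.{u} : ZFSet.{u} := ZFSet.sUnion (ZFSet.range Vn)

lemma diff_self' (x : ZFSet) : x \ x = ∅ := by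
  ext z; simp [ZFSet.mem_sdiff]

lemma main1 (x : ZFSet) (hne : x ≠ ∅) (hcl : ∀ u ∈ x, ∀ v ∈ x, ({u, v} : ZFSet) ∈ x) :
    x.toSet.Infinite := by
  obtain ⟨u, hu⟩ := (ZFSet.eq_empty_or_nonempty x).resolve_left hne
  set f : ℕ → ZFSet := fun n => (fun s => ({s, s} : ZFSet))^[n] u with hf
  have hrank : ∀ n, (f n).rank = u.rank + n := by
    intro n
    induction n with
    | zero => simp [hf]
    | succ n ih =>
      have : f (n+1) = {f n, f n} := Function.iterate_succ_apply' _ _ _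
      rw [this]
      have : ({f n, f n} : ZFSet) = ({f n} : ZFSet) := by ext z; simp [ZFSet.mem_pair]
      rw [this, ZFSet.rank_singleton, ih, Nat.cast_succ, ← add_assoc, Ordinal.add_one_eq_succ]
  have hinj : Function.Injective f := by
    intro m n h
    have := hrank m ▸ hrank n ▸ congrArg ZFSet.rank h
    exact Nat.cast_injective (add_left_cancel this)
  have hmem : ∀ n, f n ∈ x.toSet := by
    intro n
    induction n with
    | zero => exact hu
    | succ n ih =>
      have : f (n+1) = {f n, f n} := Function.iterate_succ_apply' _ _ _
      rw [show ∀ a (y : ZFSet), a ∈ y.toSet ↔ a ∈ y from fun _ _ => Iff.rfl] at ih ⊢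
      rw [this]; exact hcl _ ih _ ih
  exact Set.infinite_of_injective_forall_mem hinj hmem

lemma mem_Vω {y : ZFSet} : y ∈ Vω ↔ ∃ n, y ∈ Vn n := by
  simp [Vω, ZFSet.mem_sUnion, ZFSet.mem_range]

/-- every nonempty set closed under unordered pairs of its elements is
infinite; consequently `x ≠ x \ x ∧ x ⊗ x ⊆ x` is satisfiable but has no finite model. -/
theorem stmt16 :
    (∀ x : ZFSet, x ≠ (∅ : ZFSet) → (∀ u ∈ x, ∀ v ∈ x, ({u, v} : ZFSet) ∈ x) →
      x.toSet.Infinite) ∧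
    (∃ x : ZFSet, x ≠ x \ x ∧ uprod x x ⊆ x.toSet) ∧
    (∀ x : ZFSet, x ≠ x \ x → uprod x x ⊆ x.toSet → x.toSet.Infinite) := by
  refine ⟨fun x hne => main1 x hne, ?_, ?_⟩
  · refine ⟨Vω, ?_, ?_⟩
    · rw [diff_self']
      intro h
      have : (∅ : ZFSet) ∈ Vω := by
        rw [mem_Vω]; exact ⟨1, by rw [Vn, ZFSet.mem_powerset]; exact fun z hz => absurd hz (ZFSet.notMem_empty z)⟩
      rw [h] at this; exact ZFSet.notMem_empty _ this
    · rintro w ⟨u, hu, v, hv, rfl⟩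
      rw [show ∀ a (y : ZFSet), a ∈ y.toSet ↔ a ∈ y from fun _ _ => Iff.rfl, mem_Vω]
      obtain ⟨m, hm⟩ := mem_Vω.mp hu
      obtain ⟨n, hn⟩ := mem_Vω.mp hv
      refine ⟨max m n + 1, ?_⟩
      rw [Vn, ZFSet.mem_powerset]
      intro z hz
      rcases ZFSet.mem_pair.mp hz with rfl | rfl
      · exact Vn_mono' (le_max_left m n) hm
      · exact Vn_mono' (le_max_right m n) hn
  · intro x hne hsub
    apply main1 x
    · intro h; exact hne (h.trans (diff_self' x).symm)
    · intro u hu v hv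
      exact hsub ⟨u, hu, v, hv, rfl⟩


end BSTO
end

section
/- Every finitely satisfiable BST⊗-conjunction is fulfilled by an accessible ⊗-graph that admits a topological ⊗-order (i.e., by an accessible ordered ⊗-graph). -/
namespace BSTO

lemma zmem_pair {t u v : ZFSet} : t ∈ ({u, v} : ZFSet) ↔ t = u ∨ t = v := by
  simp [ZFSet.mem_insert_iff, ZFSet.mem_singleton]

lemma zpair_eq {a b c d : ZFSet} (h : ({a, b} : ZFSet) = {c, d}) :
    (a = c ∧ b = d) ∨ (a = d ∧ b = c) := by
  have ha : a = c ∨ a = d := zmem_pair.mp (h ▸ zmem_pair.mpr (Or.inl rfl))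
  have hb : b = c ∨ b = d := zmem_pair.mp (h ▸ zmem_pair.mpr (Or.inr rfl))
  have hc : c = a ∨ c = b := zmem_pair.mp (h.symm ▸ zmem_pair.mpr (Or.inl rfl))
  have hd : d = a ∨ d = b := zmem_pair.mp (h.symm ▸ zmem_pair.mpr (Or.inr rfl))
  rcases ha with rfl | rfl <;> rcases hb with rfl | rfl <;> tauto

lemma pairVal {α : Type} (f : α → ZFSet) {p q u v : α}
    (h : ({p, q} : Set α) = {u, v}) : ({f p, f q} : ZFSet) = {f u, f v} := by
  rcases Set.pair_eq_pair_iff.mp h with ⟨rfl, rfl⟩ | ⟨rfl, rfl⟩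
  · rfl
  · apply ZFSet.ext; intro t; rw [zmem_pair, zmem_pair]; tauto

/-- every finitely satisfiable BST⊗-conjunction is fulfilled by an
accessible ⊗-graph admitting a topological ⊗-order. -/
theorem stmt17 {V : Type} [Finite V] (Φ : List (Lit V))
    (h : ∃ M : V → ZFSet, (∀ l ∈ Φ, Lit.Sat M l) ∧ (⋃ v : V, (M v).toSet).Finite) :
    ∃ (P : Type) (T : Set P → Set P) (r : P → P → Prop),
      Finite P ∧ (∀ A, A ∉ NodesOf P → T A = ∅) ∧ (∀ p : P, Accessible T p) ∧
      IsTopOOrder T r ∧ ∃ F : V → Set P, Fulfills T F Φ := by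
  classical
  obtain ⟨M, hsat, hfin⟩ := h
  set D : Set ZFSet := ⋃ v : V, (M v).toSet with hDdef
  have hPfin : Finite ↥D := hfin.to_subtype
  obtain ⟨n, ⟨e⟩⟩ := Finite.exists_equiv_fin ↥D
  set g : Fin n → ZFSet := fun i => ((e.symm i : ↥D) : ZFSet) with hgdef
  have hginj : Function.Injective g :=
    fun a b hab => e.symm.injective (Subtype.coe_injective hab)
  have hmemD : ∀ v : V, ∀ t : ZFSet, t ∈ M v → ∃ i : Fin n, g i = t := by
    intro v t ht
    refine ⟨e ⟨t, Set.mem_iUnion.mpr ⟨v, ht⟩⟩, ?_⟩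
    simp [hgdef]
  set T : Set (Fin n) → Set (Fin n) := fun A =>
    {w | ∃ p q : Fin n, A = {p, q} ∧ g w = ({g p, g q} : ZFSet)} with hTdef
  set r : Fin n → Fin n → Prop := fun a b =>
    ZFSet.rank (g a) < ZFSet.rank (g b) ∨
    (ZFSet.rank (g a) = ZFSet.rank (g b) ∧ a < b) with hrdef
  have hTval : ∀ (p q w : Fin n), w ∈ T {p, q} → g w = ({g p, g q} : ZFSet) := by
    intro p q w hw
    obtain ⟨p', q', hA, hval⟩ := hw
    rw [hval]
    exact (pairVal g hA).symm
  have hrtotal : ∀ a b : Fin n, a ≠ b → r a b ∨ r b a := by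
    intro a b hab
    rcases lt_trichotomy (ZFSet.rank (g a)) (ZFSet.rank (g b)) with h1 | h1 | h1
    · exact Or.inl (Or.inl h1)
    · rcases lt_or_gt_of_ne hab with h2 | h2
      · exact Or.inl (Or.inr ⟨h1, h2⟩)
      · exact Or.inr (Or.inr ⟨h1.symm, h2⟩)
    · exact Or.inr (Or.inl h1)
  refine ⟨Fin n, T, r, inferInstance, ?_, ?_, ?_, ?_⟩
  · -- T vanishes outside nodes
    intro A hA
    rw [Set.eq_empty_iff_forall_notMem]
    rintro w ⟨p, q, hApq, -⟩
    exact hA ⟨p, q, hApq⟩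
  · -- accessibility
    suffices hs : ∀ x : ZFSet, ∀ p : Fin n, g p = x → Accessible T p by
      intro p; exact hs _ p rfl
    intro x
    refine ZFSet.mem_wf.induction
      (C := fun x => ∀ p : Fin n, g p = x → Accessible T p) x ?_
    intro x ih p hp
    by_cases hsrc : ∃ A ∈ NodesOf (Fin n), p ∈ T A
    · obtain ⟨A, hA, hpA⟩ := hsrc
      obtain ⟨p₁, p₂, hApq, hpval⟩ := hpA
      refine Accessible.step p A hA ?_ ⟨p₁, p₂, hApq, hpval⟩
      intro q hq
      have hqmem : g q ∈ x := by
        rw [← hp, hpval, zmem_pair]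
        rw [hApq] at hq
        rcases hq with rfl | hq
        · exact Or.inl rfl
        · exact Or.inr (by rw [Set.mem_singleton_iff.mp hq])
      exact ih _ hqmem q rfl
    · push_neg at hsrc
      exact Accessible.source p hsrc
  · -- topological ⊗-order
    refine ⟨?_, ?_, hrtotal, ?_⟩
    · rintro a (h1 | ⟨-, h2⟩)
      · exact lt_irrefl _ h1
      · exact lt_irrefl _ h2
    · rintro a b c (h1 | ⟨h1, h1'⟩) (h2 | ⟨h2, h2'⟩)
      · exact Or.inl (h1.trans h2)
      · exact Or.inl (h1.trans_eq h2)
      · exact Or.inl (h1.trans_lt h2)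
      · exact Or.inr ⟨h1.trans h2, h1'.trans h2'⟩
    · intro A hA hne
      obtain ⟨w, hw⟩ := hne
      obtain ⟨p₁, p₂, hApq, hwval⟩ := hw
      have hwA : w ∈ T A := ⟨p₁, p₂, hApq, hwval⟩
      have hTw : ∀ w' ∈ T A, w' = w := by
        intro w' hw'
        rw [hApq] at hw'
        apply hginj
        rw [hTval p₁ p₂ w' hw', hwval]
      obtain ⟨m, hmem, hmax⟩ : ∃ m, m ∈ ({p₁, p₂} : Set (Fin n)) ∧
          ∀ p ∈ ({p₁, p₂} : Set (Fin n)), p = m ∨ r p m := by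
        by_cases hpp : p₁ = p₂
        · subst hpp
          refine ⟨p₁, Or.inl rfl, ?_⟩
          rintro p (rfl | hp)
          · exact Or.inl rfl
          · exact Or.inl (Set.mem_singleton_iff.mp hp)
        · rcases hrtotal p₁ p₂ hpp with hr12 | hr21
          · refine ⟨p₂, Or.inr rfl, ?_⟩
            rintro p (rfl | hp)
            · exact Or.inr hr12
            · exact Or.inl (Set.mem_singleton_iff.mp hp)
          · refine ⟨p₁, Or.inl rfl, ?_⟩
            rintro p (rfl | hp)
            · exact Or.inl rfl
            · rw [Set.mem_singleton_iff.mp hp]; exact Or.inr hr21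
      refine ⟨m, w, ⟨hApq ▸ hmem, hApq ▸ hmax⟩,
        ⟨hwA, fun w' hw' => Or.inl (hTw w' hw')⟩, ?_⟩
      have hmw : g m ∈ g w := by
        rw [hwval, zmem_pair]
        rcases hmem with rfl | hm
        · exact Or.inl rfl
        · exact Or.inr (by rw [Set.mem_singleton_iff.mp hm])
      exact Or.inl (ZFSet.rank_lt_of_mem hmw)
  · -- fulfillment
    refine ⟨fun v => {i : Fin n | g i ∈ M v}, ?_⟩
    intro l hl
    have hls := hsat l hl
    cases l with
    | eqUnion x y z =>
      have hxyz : M x = M y ∪ M z := hls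
      show {i : Fin n | g i ∈ M x} = _ ∪ _
      ext i
      simp only [Set.mem_setOf_eq, Set.mem_union, hxyz, ZFSet.mem_union]
    | eqDiff x y z =>
      have hxyz : M x = M y \ M z := hls
      show {i : Fin n | g i ∈ M x} = _ \ _
      ext i
      simp only [Set.mem_setOf_eq, Set.mem_diff, hxyz, ZFSet.mem_sdiff]
    | ne x y =>
      have hxy : M x ≠ M y := hls
      intro hF
      have hF' : {i : Fin n | g i ∈ M x} = {i : Fin n | g i ∈ M y} := hF
      apply hxy
      apply ZFSet.ext
      intro t
      constructor
      · intro ht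
        obtain ⟨i, rfl⟩ := hmemD x t ht
        have : i ∈ {j : Fin n | g j ∈ M x} := ht
        rw [hF'] at this
        exact this
      · intro ht
        obtain ⟨i, rfl⟩ := hmemD y t ht
        have : i ∈ {j : Fin n | g j ∈ M y} := ht
        rw [← hF'] at this
        exact this
    | eqUprod x y z =>
      have hxyz : (M x).toSet = uprod (M y) (M z) := hls
      refine ⟨?_, ?_, ?_⟩
      · -- (c1)
        intro υ hυ ζ hζ
        have hpu : ({g υ, g ζ} : ZFSet) ∈ M x := by
          have h1 : ({g υ, g ζ} : ZFSet) ∈ uprod (M y) (M z) :=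
            ⟨g υ, hυ, g ζ, hζ, rfl⟩
          rw [← hxyz] at h1
          exact h1
        obtain ⟨w, hwval⟩ := hmemD x _ hpu
        have hwT : w ∈ T {υ, ζ} := ⟨υ, ζ, rfl, hwval⟩
        refine ⟨⟨w, hwT⟩, ?_⟩
        intro w' hw'
        show g w' ∈ M x
        rw [hTval υ ζ w' hw']
        exact hpu
      · -- (c2)
        intro w hw
        have hwx : g w ∈ M x := hw
        have h1 : g w ∈ uprod (M y) (M z) := by rw [← hxyz]; exact hwx
        obtain ⟨u, hu, v, hv, hwuv⟩ := h1
        obtain ⟨i, rfl⟩ := hmemD y u hu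
        obtain ⟨j, rfl⟩ := hmemD z v hv
        exact Set.mem_biUnion ⟨i, hu, j, hv, rfl⟩ ⟨i, j, rfl, hwuv⟩
      · -- (c3)
        rw [Set.eq_empty_iff_forall_notMem]
        rintro w ⟨hw1, hw2⟩
        obtain ⟨A, hA, hwA⟩ := Set.mem_iUnion₂.mp hw1
        obtain ⟨hAnode, hAnot⟩ := hA
        obtain ⟨p, q, hApq, hwval⟩ := hwA
        have hwx : g w ∈ M x := hw2
        have h1 : g w ∈ uprod (M y) (M z) := by rw [← hxyz]; exact hwx
        obtain ⟨u, hu, v, hv, hwuv⟩ := h1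
        have hpq : ({g p, g q} : ZFSet) = {u, v} := by
          rw [← hwval, hwuv]
        apply hAnot
        rcases zpair_eq hpq with ⟨hpu, hqv⟩ | ⟨hpv, hqu⟩
        · exact ⟨p, by show g p ∈ M y; rw [hpu]; exact hu,
            q, by show g q ∈ M z; rw [hqv]; exact hv, hApq⟩
        · exact ⟨q, by show g q ∈ M y; rw [hqu]; exact hu,
            p, by show g p ∈ M z; rw [hpv]; exact hv,
            by rw [hApq, Set.pair_comm]⟩

end BSTO
end
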